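/- Fix integers 0 = k₀ < k₁ < ⋯ < k_M = p and suppose (k_{m+1} − k_m)/(k_m − k_{m-1}) ≤ 1 + ζ for all 1 ≤ m ≤ M−1, where ζ ≥ 0. Let a₁,...,a_p ≥ 0, let σ² > 0, and for γ ∈ Γ_p = {γ : 1 = γ₁ ≥ ⋯ ≥ γ_p ≥ 0} define R_a(γ) = Σ_{j=1}^p [a_j(1−γ_j)² + σ² γ_j²]. For coarse weights γ̄ ∈ Γ_M define R_M(γ̄) = Σ_{m=1}^M [(Σ_{j=k_{m-1}+1}^{k_m} a_j)(1−γ̄_m)² + (k_m−k_{m-1})σ² γ̄_m²]. Then min_{γ̄ ∈ Γ_M} R_M(γ̄) ≤ (1+ζ) min_{γ ∈ Γ_p} R_a(γ) + k₁σ². -/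

import Mathlib

private lemma sumBlocks (f : ℕ → ℝ) : ∀ (M : ℕ) (k : ℕ → ℕ),
    (∀ i j, i ≤ j → j ≤ M → k i ≤ k j) →
    ∑ m ∈ Finset.Icc 1 M, ∑ j ∈ Finset.Ioc (k (m-1)) (k m), f j
      = ∑ j ∈ Finset.Ioc (k 0) (k M), f j := by
  intro M
  induction M with
  | zero => intro k h; simp
  | succ n ih =>
    intro k h
    rw [Finset.sum_Icc_succ_top (by omega : 1 ≤ n+1),
      ih k (fun i j hij hj => h i j hij (by omega)), show n+1-1 = n from rfl]
    exact Finset.sum_Ioc_consecutive f (h 0 n (by omega) (by omega))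
      (h n (n+1) (by omega) (by omega))

theorem stmt12 (M p : ℕ) (hM : 1 ≤ M) (k : ℕ → ℕ) (ζ : ℝ) (hζ : 0 ≤ ζ)
    (hk0 : k 0 = 0) (hkp : k M = p)
    (hkmono : ∀ m, m < M → k m < k (m+1))
    (hratio : ∀ m, 1 ≤ m → m ≤ M - 1 →
      ((k (m+1) : ℝ) - (k m : ℝ)) / ((k m : ℝ) - (k (m-1) : ℝ)) ≤ 1 + ζ)
    (a : ℕ → ℝ) (ha : ∀ j ∈ Finset.Icc 1 p, 0 ≤ a j) (v : ℝ) (hv : 0 < v) :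
    sInf ((fun γ : ℕ → ℝ => ∑ m ∈ Finset.Icc 1 M,
        ((∑ j ∈ Finset.Icc (k (m-1) + 1) (k m), a j) * (1 - γ m)^2
          + ((k m : ℝ) - (k (m-1) : ℝ)) * v * γ m^2)) ''
      {γ | γ 1 = 1 ∧ (∀ m, 1 ≤ m → m < M → γ (m+1) ≤ γ m) ∧ 0 ≤ γ M})
    ≤ (1 + ζ) * sInf ((fun γ : ℕ → ℝ => ∑ j ∈ Finset.Icc 1 p,
        (a j * (1 - γ j)^2 + v * γ j^2)) ''
      {γ | γ 1 = 1 ∧ (∀ j, 1 ≤ j → j < p → γ (j+1) ≤ γ j) ∧ 0 ≤ γ p})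
    + (k 1 : ℝ) * v := by
  have h1ζ : (0:ℝ) < 1 + ζ := by linarith
  -- monotonicity of k
  have hkle : ∀ i j, i ≤ j → j ≤ M → k i ≤ k j := by
    intro i j hij
    induction j with
    | zero => intro _; have : i = 0 := by omega
              subst this; exact le_rfl
    | succ n ih =>
      intro hnM
      rcases Nat.lt_or_ge i (n+1) with h | h
      · exact le_trans (ih (by omega) (by omega)) (hkmono n (by omega)).le
      · have : i = n+1 := by omega
        subst this; exact le_rfl
  have hklt : ∀ i j, i < j → j ≤ M → k i < k j := by
    intro i j hij hjM
    have h1 : k i ≤ k (j-1) := hkle i (j-1) (by omega) (by omega)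
    have h2 : k (j-1) < k (j-1+1) := hkmono (j-1) (by omega)
    have : j - 1 + 1 = j := by omega
    rw [this] at h2; omega
  set Rc : (ℕ → ℝ) → ℝ := fun γ : ℕ → ℝ => ∑ m ∈ Finset.Icc 1 M,
      ((∑ j ∈ Finset.Icc (k (m-1) + 1) (k m), a j) * (1 - γ m)^2
        + ((k m : ℝ) - (k (m-1) : ℝ)) * v * γ m^2) with hRcdef
  set Rf : (ℕ → ℝ) → ℝ := fun γ : ℕ → ℝ => ∑ j ∈ Finset.Icc 1 p,
      (a j * (1 - γ j)^2 + v * γ j^2) with hRfdef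
  set Sc : Set (ℕ → ℝ) := {γ | γ 1 = 1 ∧ (∀ m, 1 ≤ m → m < M → γ (m+1) ≤ γ m) ∧ 0 ≤ γ M}
    with hScdef
  set Sf : Set (ℕ → ℝ) := {γ | γ 1 = 1 ∧ (∀ j, 1 ≤ j → j < p → γ (j+1) ≤ γ j) ∧ 0 ≤ γ p}
    with hSfdef
  -- fine set nonempty
  have hfne : (Rf '' Sf).Nonempty := ⟨Rf (fun _ => 1),
    ⟨fun _ => 1, ⟨rfl, fun _ _ _ => le_rfl, by norm_num⟩, rfl⟩⟩
  -- coarse image bounded below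
  have hbdd : BddBelow (Rc '' Sc) := by
    refine ⟨0, fun x hx => ?_⟩
    obtain ⟨γ, _, rfl⟩ := hx
    apply Finset.sum_nonneg
    intro m hm
    rw [Finset.mem_Icc] at hm
    have hA : 0 ≤ ∑ j ∈ Finset.Icc (k (m-1) + 1) (k m), a j := by
      apply Finset.sum_nonneg
      intro j hj
      rw [Finset.mem_Icc] at hj
      refine ha j (Finset.mem_Icc.mpr ⟨by omega, ?_⟩)
      exact le_trans hj.2 (hkp ▸ hkle m M hm.2 le_rfl)
    have hn : (0:ℝ) ≤ (k m : ℝ) - (k (m-1) : ℝ) := by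
      have := hkle (m-1) m (by omega) hm.2
      have h' : ((k (m-1) : ℕ) : ℝ) ≤ (k m : ℝ) := by exact_mod_cast this
      linarith
    positivity
  -- key : for every fine value, coarse inf is below (1+ζ)·val + k1 v
  have key : ∀ r ∈ Rf '' Sf, sInf (Rc '' Sc) ≤ (1+ζ) * r + (k 1 : ℝ) * v := by
    rintro r ⟨γ, ⟨hγ1, hγm, hγp⟩, rfl⟩
    -- monotonicity of γ on [1,p]
    have hγle : ∀ i j, 1 ≤ i → i ≤ j → j ≤ p → γ j ≤ γ i := by
      intro i j h1 hij
      induction j with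
      | zero => intro _; omega
      | succ n ih =>
        intro hnp
        rcases Nat.lt_or_ge i (n+1) with h | h
        · exact le_trans (hγm n (by omega) (by omega)) (ih (by omega) (by omega))
        · have : i = n+1 := by omega
          subst this; exact le_rfl
    set γb : ℕ → ℝ := fun m => γ (k (m-1) + 1) with hγbdef
    have hγbmem : γb ∈ Sc := by
      refine ⟨?_, ?_, ?_⟩
      · show γ (k (1-1) + 1) = 1
        rw [show (1:ℕ)-1 = 0 from rfl, hk0]; exact hγ1
      · intro m h1m hmM
        show γ (k (m+1-1) + 1) ≤ γ (k (m-1) + 1)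
        rw [show m+1-1 = m from rfl]
        have hkmp : k m < p := hkp ▸ hklt m M hmM le_rfl
        exact hγle (k (m-1) + 1) (k m + 1) (by omega)
          (by have := hkle (m-1) m (by omega) hmM.le; omega) (by omega)
      · show 0 ≤ γ (k (M-1) + 1)
        have hkMp : k (M-1) < p := hkp ▸ hklt (M-1) M (by omega) le_rfl
        exact le_trans hγp (hγle (k (M-1) + 1) p (by omega) (by omega) le_rfl)
    have hinf : sInf (Rc '' Sc) ≤ Rc γb := csInf_le hbdd ⟨γb, hγbmem, rfl⟩
    refine le_trans hinf ?_
    -- now the main estimate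
    set T1 : ℝ := ∑ j ∈ Finset.Icc 1 p, a j * (1 - γ j)^2 with hT1def
    set T2 : ℝ := ∑ j ∈ Finset.Icc 1 p, γ j ^ 2 with hT2def
    have hT1nn : 0 ≤ T1 := by
      apply Finset.sum_nonneg
      intro j hj
      exact mul_nonneg (ha j hj) (sq_nonneg _)
    have hRf : Rf γ = T1 + v * T2 := by
      rw [hRfdef, hT1def, hT2def]
      simp [Finset.sum_add_distrib, Finset.mul_sum]
    -- Part 1
    have hS1 : ∑ m ∈ Finset.Icc 1 M,
        (∑ j ∈ Finset.Icc (k (m-1) + 1) (k m), a j) * (1 - γb m)^2 ≤ T1 := by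
      have hstep : ∀ m ∈ Finset.Icc 1 M,
          (∑ j ∈ Finset.Icc (k (m-1) + 1) (k m), a j) * (1 - γb m)^2
            ≤ ∑ j ∈ Finset.Ioc (k (m-1)) (k m), a j * (1 - γ j)^2 := by
        intro m hm
        rw [Finset.mem_Icc] at hm
        rw [Finset.sum_mul, ← Finset.Icc_add_one_left_eq_Ioc]
        apply Finset.sum_le_sum
        intro j hj
        rw [Finset.mem_Icc] at hj
        have hjp : j ≤ p := le_trans hj.2 (hkp ▸ hkle m M hm.2 le_rfl)
        have haj : 0 ≤ a j := ha j (Finset.mem_Icc.mpr ⟨by omega, hjp⟩)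
        have hγbj : γ j ≤ γb m := hγle (k (m-1) + 1) j (by omega) hj.1 hjp
        have hγb1 : γb m ≤ 1 := by
          rw [← hγ1]
          exact hγle 1 (k (m-1) + 1) le_rfl (by omega)
            (by have := hkle (m-1) m (by omega) hm.2; omega)
        have hsq : (1 - γb m)^2 ≤ (1 - γ j)^2 :=
          pow_le_pow_left₀ (by linarith) (by linarith) 2
        exact mul_le_mul_of_nonneg_left hsq haj
      calc ∑ m ∈ Finset.Icc 1 M,
          (∑ j ∈ Finset.Icc (k (m-1) + 1) (k m), a j) * (1 - γb m)^2
          ≤ ∑ m ∈ Finset.Icc 1 M, ∑ j ∈ Finset.Ioc (k (m-1)) (k m), a j * (1 - γ j)^2 :=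
            Finset.sum_le_sum hstep
        _ = ∑ j ∈ Finset.Ioc (k 0) (k M), a j * (1 - γ j)^2 :=
            sumBlocks _ M k hkle
        _ = T1 := by rw [hT1def, hk0, hkp, ← Finset.Icc_add_one_left_eq_Ioc, zero_add]
  -- Part 2
    have hS2 : ∑ m ∈ Finset.Icc 1 M,
        ((k m : ℝ) - (k (m-1) : ℝ)) * v * γb m ^2
          ≤ (k 1 : ℝ) * v + (1+ζ) * v * T2 := by
      rw [Finset.Icc_eq_cons_Ioc hM, Finset.sum_cons]
      have hfirst : ((k 1 : ℝ) - (k (1-1) : ℝ)) * v * γb 1 ^2 = (k 1 : ℝ) * v := by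
        have : γb 1 = 1 := by
          show γ (k (1-1) + 1) = 1
          rw [show (1:ℕ)-1 = 0 from rfl, hk0]; exact hγ1
        rw [this, show (1:ℕ)-1 = 0 from rfl, hk0]
        push_cast; ring
      rw [hfirst]
      have hreindex : Finset.Ioc 1 M = Finset.map (addRightEmbedding 1) (Finset.Icc 1 (M-1)) := by
        rw [Finset.map_add_right_Icc, ← Finset.Icc_add_one_left_eq_Ioc]
        congr 1
        omega
      rw [hreindex, Finset.sum_map]
      have hstep : ∀ m ∈ Finset.Icc 1 (M-1),
          ((k (addRightEmbedding 1 m) : ℝ) - (k (addRightEmbedding 1 m - 1) : ℝ)) * v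
              * γb (addRightEmbedding 1 m) ^2
            ≤ (1+ζ) * v * ∑ j ∈ Finset.Ioc (k (m-1)) (k m), γ j ^ 2 := by
        intro m hm
        rw [Finset.mem_Icc] at hm
        have hemb : (addRightEmbedding 1 m : ℕ) = m + 1 := rfl
        rw [hemb, show m+1-1 = m from rfl]
        set g : ℝ := γ (k m + 1) with hgdef
        have hγbg : γb (m+1) = g := by rw [hγbdef]; simp [hgdef]
        rw [hγbg]
        have hmM : m < M := by omega
        have hkmp : k m < p := hkp ▸ hklt m M hmM le_rfl
        have hg0 : 0 ≤ g :=
          le_trans hγp (hγle (k m + 1) p (by omega) (by omega) le_rfl)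
        have hd : (0:ℝ) < (k m : ℝ) - (k (m-1) : ℝ) := by
          have := hklt (m-1) m (by omega) hmM.le
          have h' : ((k (m-1) : ℕ) : ℝ) < (k m : ℝ) := by exact_mod_cast this
          linarith
        have hn : (k (m+1) : ℝ) - (k m : ℝ) ≤ (1+ζ) * ((k m : ℝ) - (k (m-1) : ℝ)) := by
          have := hratio m hm.1 hm.2
          rw [div_le_iff₀ hd] at this
          linarith
        have hsum : ((k m : ℝ) - (k (m-1) : ℝ)) * g^2
            ≤ ∑ j ∈ Finset.Ioc (k (m-1)) (k m), γ j ^ 2 := by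
          have hcard : ∀ j ∈ Finset.Ioc (k (m-1)) (k m), g^2 ≤ γ j ^ 2 := by
            intro j hj
            rw [Finset.mem_Ioc] at hj
            have hgj : g ≤ γ j := hγle j (k m + 1) (by omega) (by omega) (by omega)
            exact pow_le_pow_left₀ hg0 hgj 2
          have := Finset.card_nsmul_le_sum (Finset.Ioc (k (m-1)) (k m)) (fun j => γ j ^2)
            (g^2) hcard
          rw [Nat.card_Ioc, nsmul_eq_mul] at this
          have hcast : ((k m - k (m-1) : ℕ) : ℝ) = (k m : ℝ) - (k (m-1) : ℝ) := by
            have := hkle (m-1) m (by omega) hmM.le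
            push_cast [this]; ring
          rw [hcast] at this
          exact this
        have hg2 : (0:ℝ) ≤ g^2 := sq_nonneg g
        nlinarith [mul_le_mul_of_nonneg_right hn hg2, mul_le_mul_of_nonneg_left hsum h1ζ.le]
      have hrest : ∑ m ∈ Finset.Icc 1 (M-1),
          ((k (addRightEmbedding 1 m) : ℝ) - (k (addRightEmbedding 1 m - 1) : ℝ)) * v
            * γb (addRightEmbedding 1 m) ^2 ≤ (1+ζ) * v * T2 := calc
          ∑ m ∈ Finset.Icc 1 (M-1),
          ((k (addRightEmbedding 1 m) : ℝ) - (k (addRightEmbedding 1 m - 1) : ℝ)) * v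
            * γb (addRightEmbedding 1 m) ^2
          ≤ ∑ m ∈ Finset.Icc 1 (M-1), (1+ζ) * v * ∑ j ∈ Finset.Ioc (k (m-1)) (k m), γ j ^2 :=
            Finset.sum_le_sum hstep
        _ ≤ ∑ m ∈ Finset.Icc 1 M, (1+ζ) * v * ∑ j ∈ Finset.Ioc (k (m-1)) (k m), γ j ^2 := by
            apply Finset.sum_le_sum_of_subset_of_nonneg
            · exact Finset.Icc_subset_Icc le_rfl (by omega)
            · intro m _ _
              have : (0:ℝ) ≤ ∑ j ∈ Finset.Ioc (k (m-1)) (k m), γ j ^2 :=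
                Finset.sum_nonneg fun j _ => sq_nonneg _
              positivity
        _ = (1+ζ) * v * ∑ m ∈ Finset.Icc 1 M, ∑ j ∈ Finset.Ioc (k (m-1)) (k m), γ j ^2 := by
            rw [Finset.mul_sum]
        _ = (1+ζ) * v * T2 := by
            rw [sumBlocks _ M k hkle, hT2def, hk0, hkp, ← Finset.Icc_add_one_left_eq_Ioc, zero_add]
      linarith
    have hsplit : Rc γb = (∑ m ∈ Finset.Icc 1 M,
        (∑ j ∈ Finset.Icc (k (m-1) + 1) (k m), a j) * (1 - γb m)^2)
        + ∑ m ∈ Finset.Icc 1 M, ((k m : ℝ) - (k (m-1) : ℝ)) * v * γb m ^2 := by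
      rw [hRcdef]; simp [Finset.sum_add_distrib]
    rw [hsplit, hRf]
    nlinarith [mul_nonneg hζ hT1nn]
  -- finish
  have hfinal : (sInf (Rc '' Sc) - (k 1 : ℝ) * v) / (1+ζ) ≤ sInf (Rf '' Sf) := by
    apply le_csInf hfne
    intro r hr
    rw [div_le_iff₀ h1ζ]
    have := key r hr
    linarith
  rw [div_le_iff₀ h1ζ] at hfinal
  nlinarith [hfinal]
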